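/- There exists a Zariski-open dense subset U₁ of the complex determinantal variety M_ℂ = {X ∈ ℂ^{m×n} : rank X ≤ r} such that for every X = [x_1 ⋯ x_n] ∈ U₁ and every tuple (Π_1,…,Π_n) ∈ 𝒫_m^n, every m×r column-submatrix of [Π_1 x_1 ⋯ Π_n x_n] has rank r. -/

import Mathlib

/-- `P` is an `m × m` permutation matrix over `ℂ`. -/
def IsPermMatrixC {m : ℕ} (P : Matrix (Fin m) (Fin m) ℂ) : Prop :=
  ∃ σ : Equiv.Perm (Fin m), P = σ.permMatrix ℂ

/-- The complex determinantal variety `M_ℂ = {X ∈ ℂ^{m×n} : rank X ≤ r}`. -/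
def detVarC (m n r : ℕ) : Set (Matrix (Fin m) (Fin n) ℂ) :=
  {X | X.rank ≤ r}

/-- Evaluation of a polynomial in the matrix entries at a matrix. -/
noncomputable def polyEvalC {m n : ℕ} (p : MvPolynomial (Fin m × Fin n) ℂ)
    (X : Matrix (Fin m) (Fin n) ℂ) : ℂ :=
  MvPolynomial.eval (fun q => X q.1 q.2) p

/-- `U` is a nonempty Zariski-open (hence dense) subset of the complex
determinantal variety. -/
def IsZariskiOpenDenseC (m n r : ℕ) (U : Set (Matrix (Fin m) (Fin n) ℂ)) : Prop :=
  ∃ (k : ℕ) (ps : Fin k → MvPolynomial (Fin m × Fin n) ℂ),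
    (∃ (i : Fin k) (X : Matrix (Fin m) (Fin n) ℂ),
        X ∈ detVarC m n r ∧ polyEvalC (ps i) X ≠ 0) ∧
    U = {X ∈ detVarC m n r | ∃ i : Fin k, polyEvalC (ps i) X ≠ 0}

/-- Applying a tuple of `m × m` matrices columnwise to an `m × n` matrix. -/
noncomputable def colActC {m n : ℕ} (P : Fin n → Matrix (Fin m) (Fin m) ℂ)
    (X : Matrix (Fin m) (Fin n) ℂ) : Matrix (Fin m) (Fin n) ℂ :=
  Matrix.of fun i j => (P j).mulVec (fun i' => X i' j) i

noncomputable section Stmt4Aux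

/-- Index type: a choice of `r` distinct columns together with, for each of the `r`
positions, a choice of `r` distinct rows. -/
abbrev Stmt4Idx (m n r : ℕ) := (Fin r ↪ Fin n) × (Fin r → (Fin r ↪ Fin m))

/-- Generalized `r × r` minor, as a polynomial in the matrix entries. -/
def stmt4qp (m n r : ℕ) (t : Stmt4Idx m n r) : MvPolynomial (Fin m × Fin n) ℂ :=
  (Matrix.of fun a b : Fin r => MvPolynomial.X (t.2 b a, t.1 b)).det

/-- The product of all generalized minors. -/
def stmt4P (m n r : ℕ) : MvPolynomial (Fin m × Fin n) ℂ :=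
  ∏ t : Stmt4Idx m n r, stmt4qp m n r t

lemma stmt4_polyEvalC_qp (m n r : ℕ) (t : Stmt4Idx m n r)
    (X : Matrix (Fin m) (Fin n) ℂ) :
    polyEvalC (stmt4qp m n r t) X
      = (Matrix.of fun a b : Fin r => X (t.2 b a) (t.1 b)).det := by
  unfold stmt4qp polyEvalC
  rw [RingHom.map_det]
  congr 1
  ext a b
  simp [Matrix.map]

lemma stmt4_polyEvalC_P (m n r : ℕ) (X : Matrix (Fin m) (Fin n) ℂ) :
    polyEvalC (stmt4P m n r) X
      = ∏ t : Stmt4Idx m n r,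
          (Matrix.of fun a b : Fin r => X (t.2 b a) (t.1 b)).det := by
  unfold stmt4P polyEvalC
  rw [map_prod]
  exact Finset.prod_congr rfl fun t _ => stmt4_polyEvalC_qp m n r t X

/-- Variables for the `A·B` parametrization of the rank-`≤ r` variety. -/
abbrev Stmt4Vars (m n r : ℕ) := (Fin m × Fin r) ⊕ (Fin r × Fin n)

/-- The generalized minor of `A·B`, as a polynomial in the entries of `A` and `B`. -/
def stmt4ap (m n r : ℕ) (t : Stmt4Idx m n r) : MvPolynomial (Stmt4Vars m n r) ℂ :=
  (Matrix.of fun a b : Fin r =>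
    ∑ c : Fin r, MvPolynomial.X (Sum.inl (t.2 b a, c)) *
      MvPolynomial.X (Sum.inr (c, t.1 b))).det

lemma stmt4_eval_ap (m n r : ℕ) (α : Stmt4Vars m n r → ℂ) (t : Stmt4Idx m n r) :
    MvPolynomial.eval α (stmt4ap m n r t)
      = (Matrix.of fun a b : Fin r =>
          ∑ c : Fin r, α (Sum.inl (t.2 b a, c)) * α (Sum.inr (c, t.1 b))).det := by
  unfold stmt4ap
  rw [RingHom.map_det]
  congr 1
  ext a b
  simp [Matrix.map]

lemma stmt4_ap_ne_zero (m n r : ℕ) (t : Stmt4Idx m n r) : stmt4ap m n r t ≠ 0 := by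
  intro h
  classical
  set χ : Stmt4Vars m n r → ℂ := fun v => match v with
    | Sum.inl (i, c) => if i = t.2 c c then 1 else 0
    | Sum.inr (c, j) => if j = t.1 c then 1 else 0 with hχ
  have hev := stmt4_eval_ap m n r χ t
  rw [h, map_zero] at hev
  have hM : (Matrix.of fun a b : Fin r =>
      ∑ c : Fin r, χ (Sum.inl (t.2 b a, c)) * χ (Sum.inr (c, t.1 b)))
      = (1 : Matrix (Fin r) (Fin r) ℂ) := by
    ext a b
    simp only [Matrix.of_apply, hχ]
    rw [Finset.sum_eq_single b]
    · by_cases hab : a = b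
      · subst hab; simp [Matrix.one_apply]
      · have : t.2 b a ≠ t.2 b b := fun hc => hab ((t.2 b).injective hc)
        simp [this, Matrix.one_apply, hab]
    · intro c _ hcb
      have : t.1 b ≠ t.1 c := fun hc => hcb (t.1.injective hc).symm
      simp [this]
    · intro hb; exact absurd (Finset.mem_univ b) hb
  rw [hM, Matrix.det_one] at hev
  exact one_ne_zero hev.symm

lemma stmt4_exists_good (m n r : ℕ) :
    ∃ X : Matrix (Fin m) (Fin n) ℂ, X.rank ≤ r ∧ polyEvalC (stmt4P m n r) X ≠ 0 := by
  classical
  have hprod : (∏ t : Stmt4Idx m n r, stmt4ap m n r t) ≠ 0 :=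
    Finset.prod_ne_zero_iff.mpr fun t _ => stmt4_ap_ne_zero m n r t
  have hex : ∃ α : Stmt4Vars m n r → ℂ,
      MvPolynomial.eval α (∏ t : Stmt4Idx m n r, stmt4ap m n r t) ≠ 0 := by
    by_contra hc
    push_neg at hc
    exact hprod (MvPolynomial.funext fun x => by rw [hc x, map_zero])
  obtain ⟨α, hα⟩ := hex
  set A : Matrix (Fin m) (Fin r) ℂ := Matrix.of fun i c => α (Sum.inl (i, c)) with hA
  set B : Matrix (Fin r) (Fin n) ℂ := Matrix.of fun c j => α (Sum.inr (c, j)) with hB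
  refine ⟨A * B, ?_, ?_⟩
  · refine (Matrix.rank_mul_le_left A B).trans ?_
    simpa using Matrix.rank_le_card_width A
  · have heq : polyEvalC (stmt4P m n r) (A * B)
        = MvPolynomial.eval α (∏ t : Stmt4Idx m n r, stmt4ap m n r t) := by
      rw [stmt4_polyEvalC_P, map_prod]
      refine Finset.prod_congr rfl fun t _ => ?_
      rw [stmt4_eval_ap]
      congr 1
    rw [heq]
    exact hα

lemma stmt4_permMatrix_mulVec {m : ℕ} (σ : Equiv.Perm (Fin m)) (v : Fin m → ℂ)
    (i : Fin m) : (σ.permMatrix ℂ).mulVec v i = v (σ i) := by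
  classical
  simp only [Matrix.mulVec, dotProduct, Equiv.Perm.permMatrix,
    PEquiv.toMatrix_apply, Equiv.toPEquiv_apply, Option.mem_def, Option.some.injEq,
    ite_mul, one_mul, zero_mul]
  rw [Finset.sum_ite_eq Finset.univ (σ i) v]
  simp

lemma stmt4_rank_submatrix_le {m r : ℕ} (f : Fin r → Fin m)
    (A : Matrix (Fin m) (Fin r) ℂ) :
    (A.submatrix f _root_.id).rank ≤ A.rank := by
  have h : A.submatrix f _root_.id = A.submatrix f (Equiv.refl (Fin r)) := rfl
  rw [h, Matrix.rank, Matrix.rank, Matrix.mulVecLin_submatrix, LinearMap.range_comp,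
    LinearMap.range_comp]
  have hsurj : LinearMap.range (LinearMap.funLeft ℂ ℂ ⇑(Equiv.refl (Fin r)).symm) = ⊤ := by
    rw [LinearMap.range_eq_top]
    exact fun x => ⟨x, rfl⟩
  rw [hsurj, Submodule.map_top]
  exact Submodule.finrank_map_le _ _

end Stmt4Aux

/-- **Lemma 1.** On a Zariski-open dense subset `U₁` of `M_ℂ`, every `m × r`
column-submatrix of `[Π₁x₁ ⋯ Πₙxₙ]` has rank `r`, for every tuple of
permutation matrices. -/
theorem stmt4 (m n r : ℕ) (hr : r < min m n) :
    ∃ U : Set (Matrix (Fin m) (Fin n) ℂ),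
      IsZariskiOpenDenseC m n r U ∧
      ∀ X ∈ U,
        ∀ P : Fin n → Matrix (Fin m) (Fin m) ℂ, (∀ j, IsPermMatrixC (P j)) →
        ∀ g : Fin r → Fin n, Function.Injective g →
          (Matrix.of fun i (k : Fin r) => (colActC P X) i (g k)).rank = r := by
  classical
  have hm : r ≤ m := (lt_min_iff.mp hr).1.le
  obtain ⟨X₀, hX₀r, hX₀p⟩ := stmt4_exists_good m n r
  refine ⟨{X ∈ detVarC m n r |
      ∃ i : Fin 1, polyEvalC ((fun _ => stmt4P m n r) i) X ≠ 0}, ?_, ?_⟩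
  · exact ⟨1, fun _ => stmt4P m n r, ⟨0, X₀, hX₀r, hX₀p⟩, rfl⟩
  · rintro X ⟨hXvar, _, hXp⟩ P hP g hg
    have hfac : ∀ t : Stmt4Idx m n r,
        (Matrix.of fun a b : Fin r => X (t.2 b a) (t.1 b)).det ≠ 0 := by
      intro t h0
      apply hXp
      rw [stmt4_polyEvalC_P]
      exact Finset.prod_eq_zero (Finset.mem_univ t) h0
    choose σ hσ using hP
    have hcol : ∀ i j, colActC P X i j = X (σ j i) j := by
      intro i j
      show (P j).mulVec (fun i' => X i' j) i = _
      rw [hσ j, stmt4_permMatrix_mulVec]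
    set M : Matrix (Fin m) (Fin r) ℂ :=
      Matrix.of fun i (k : Fin r) => (colActC P X) i (g k) with hM
    set t : Stmt4Idx m n r :=
      (⟨g, hg⟩, fun b => (Fin.castLEEmb hm).trans (σ (g b)).toEmbedding) with ht
    have hsub : (Matrix.of fun a b : Fin r => X (t.2 b a) (t.1 b))
        = M.submatrix (Fin.castLE hm) _root_.id := by
      ext a b
      simp only [Matrix.of_apply, Matrix.submatrix_apply, _root_.id, hM, ht,
        Function.Embedding.trans_apply, Fin.castLEEmb_apply, Equiv.coe_toEmbedding,
        Function.Embedding.coeFn_mk]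
      rw [hcol]
    have hdet : (M.submatrix (Fin.castLE hm) _root_.id).det ≠ 0 := by
      rw [← hsub]; exact hfac t
    have hrankN : (M.submatrix (Fin.castLE hm) _root_.id).rank = r := by
      have : IsUnit (M.submatrix (Fin.castLE hm) _root_.id) :=
        (Matrix.isUnit_iff_isUnit_det _).mpr (isUnit_iff_ne_zero.mpr hdet)
      simpa using Matrix.rank_of_isUnit _ this
    have h1 : M.rank ≤ r := by
      simpa using Matrix.rank_le_card_width M
    have h2 : r ≤ M.rank :=
      le_trans (le_of_eq hrankN.symm) (stmt4_rank_submatrix_le (Fin.castLE hm) M)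
    exact le_antisymm h1 h2
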